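/- Let F = Σ_{n≥0} a_n X^n ∈ ℂ[[X]] be a formal power series and let G = Σ_{n≥0} b_n X^n be the formal power series obtained from F by substituting X ↦ e^X − 1, i.e. G = F(exp(X) − 1) where exp(X) − 1 = Σ_{m≥1} X^m/m! has zero constant term so the substitution is well defined. Then F is Gevrey (i.e. there is C > 0 with |a_n| ≤ C^n·n! for all n ≥ 1) if and only if G is Gevrey (i.e. there is C' > 0 with |b_n| ≤ C'^n·n! for all n ≥ 1). -/

import Mathlib

open Finset PowerSeries
noncomputable section

/-- composition helper: substitute `g` (zero constant term) into `f`. -/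
noncomputable def gevComp (g f : PowerSeries ℂ) : PowerSeries ℂ :=
  PowerSeries.mk fun n => ∑ k ∈ Finset.range (n + 1),
    PowerSeries.coeff k f * PowerSeries.coeff n (g ^ k)

lemma coeff_gevComp (g f : PowerSeries ℂ) (n : ℕ) :
    PowerSeries.coeff n (gevComp g f) = ∑ k ∈ Finset.range (n + 1),
      PowerSeries.coeff k f * PowerSeries.coeff n (g ^ k) := by
  simp [gevComp]

lemma coeff_pow_eq_zero' {g : PowerSeries ℂ} (hg : PowerSeries.constantCoeff g = 0)
    {n k : ℕ} (h : n < k) : PowerSeries.coeff n (g ^ k) = 0 :=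
  PowerSeries.X_pow_dvd_iff.mp (pow_dvd_pow_of_dvd (PowerSeries.X_dvd_iff.mpr hg) k) n h

lemma sum_coeff_pow_ext {g : PowerSeries ℂ} (hg : PowerSeries.constantCoeff g = 0)
    (f : ℕ → ℂ) {n N : ℕ} (h : n + 1 ≤ N) :
    ∑ k ∈ Finset.range N, f k * PowerSeries.coeff n (g ^ k)
      = ∑ k ∈ Finset.range (n + 1), f k * PowerSeries.coeff n (g ^ k) := by
  symm
  refine Finset.sum_subset (Finset.range_subset_range.mpr h) ?_
  intro k hk hk'
  rw [coeff_pow_eq_zero' hg (by simp at hk' ⊢; omega), mul_zero]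

lemma coeff_gevComp_eval (g f : PowerSeries ℂ) (n : ℕ) :
    PowerSeries.coeff n (gevComp g f)
      = PowerSeries.coeff n
          (Polynomial.eval₂ (PowerSeries.C) g (PowerSeries.trunc (n + 1) f)) := by
  rw [Polynomial.eval₂_eq_sum_range' (PowerSeries.C) (PowerSeries.natDegree_trunc_lt f n) g,
    map_sum, coeff_gevComp]
  refine Finset.sum_congr rfl fun k hk => ?_
  rw [PowerSeries.coeff_C_mul, PowerSeries.coeff_trunc, if_pos (Finset.mem_range.mp hk)]

lemma coeff_eval₂_eq_zero {g : PowerSeries ℂ} (hg : PowerSeries.constantCoeff g = 0)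
    {P : Polynomial ℂ} {n : ℕ} (hP : ∀ i ≤ n, P.coeff i = 0) :
    PowerSeries.coeff n (Polynomial.eval₂ (PowerSeries.C) g P) = 0 := by
  rw [Polynomial.eval₂_eq_sum, Polynomial.sum_def, map_sum]
  refine Finset.sum_eq_zero fun i _ => ?_
  rcases le_or_gt i n with h | h
  · rw [hP i h]; simp
  · rw [PowerSeries.coeff_C_mul, coeff_pow_eq_zero' hg h, mul_zero]

lemma coeff_eval₂_congr {g : PowerSeries ℂ} (hg : PowerSeries.constantCoeff g = 0)
    {P Q : Polynomial ℂ} {n : ℕ} (h : ∀ i ≤ n, P.coeff i = Q.coeff i) :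
    PowerSeries.coeff n (Polynomial.eval₂ (PowerSeries.C) g P)
      = PowerSeries.coeff n (Polynomial.eval₂ (PowerSeries.C) g Q) := by
  have hz : PowerSeries.coeff n (Polynomial.eval₂ (PowerSeries.C) g (P - Q)) = 0 :=
    coeff_eval₂_eq_zero hg (by intro i hi; simp [h i hi])
  rw [Polynomial.eval₂_sub, map_sub, sub_eq_zero] at hz
  exact hz

lemma coeff_gevComp_eval' {g : PowerSeries ℂ} (hg : PowerSeries.constantCoeff g = 0)
    (f : PowerSeries ℂ) {n N : ℕ} (h : n < N) :
    PowerSeries.coeff n (gevComp g f)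
      = PowerSeries.coeff n
          (Polynomial.eval₂ (PowerSeries.C) g (PowerSeries.trunc N f)) := by
  rw [coeff_gevComp_eval g f n]
  refine coeff_eval₂_congr hg fun i hi => ?_
  rw [PowerSeries.coeff_trunc, PowerSeries.coeff_trunc, if_pos (by omega), if_pos (by omega)]

lemma gevComp_mul {g : PowerSeries ℂ} (hg : PowerSeries.constantCoeff g = 0)
    (f1 f2 : PowerSeries ℂ) :
    gevComp g (f1 * f2) = gevComp g f1 * gevComp g f2 := by
  ext n
  rw [PowerSeries.coeff_mul]
  have : ∀ p ∈ Finset.HasAntidiagonal.antidiagonal n,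
      PowerSeries.coeff p.1 (gevComp g f1) * PowerSeries.coeff p.2 (gevComp g f2)
        = PowerSeries.coeff p.1
            (Polynomial.eval₂ (PowerSeries.C) g (PowerSeries.trunc (n + 1) f1))
          * PowerSeries.coeff p.2
            (Polynomial.eval₂ (PowerSeries.C) g (PowerSeries.trunc (n + 1) f2)) := by
    intro p hp
    rw [coeff_gevComp_eval' hg f1 (Nat.lt_succ_of_le (Finset.HasAntidiagonal.antidiagonal.fst_le hp)),
      coeff_gevComp_eval' hg f2 (Nat.lt_succ_of_le (Finset.HasAntidiagonal.antidiagonal.snd_le hp))]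
  rw [Finset.sum_congr rfl this, ← PowerSeries.coeff_mul, ← Polynomial.eval₂_mul,
    coeff_gevComp_eval g (f1 * f2) n]
  refine coeff_eval₂_congr hg fun i hi => ?_
  rw [PowerSeries.coeff_trunc, if_pos (by omega), Polynomial.coeff_mul,
    PowerSeries.coeff_mul]
  refine Finset.sum_congr rfl fun p hp => ?_
  have h1 := Finset.HasAntidiagonal.antidiagonal.fst_le hp
  have h2 := Finset.HasAntidiagonal.antidiagonal.snd_le hp
  rw [PowerSeries.coeff_trunc, PowerSeries.coeff_trunc, if_pos (by omega), if_pos (by omega)]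

lemma gevComp_one (g : PowerSeries ℂ) : gevComp g 1 = 1 := by
  ext n
  rw [coeff_gevComp, Finset.sum_eq_single 0]
  · simp
  · intro k _ hk; simp [PowerSeries.coeff_one, hk]
  · intro h; simp at h

lemma gevComp_pow {g : PowerSeries ℂ} (hg : PowerSeries.constantCoeff g = 0)
    (f : PowerSeries ℂ) (j : ℕ) : gevComp g (f ^ j) = gevComp g f ^ j := by
  induction j with
  | zero => simpa using gevComp_one g
  | succ j ih => rw [pow_succ, pow_succ, gevComp_mul hg, ih]

lemma gevComp_sub (g f1 f2 : PowerSeries ℂ) :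
    gevComp g (f1 - f2) = gevComp g f1 - gevComp g f2 := by
  ext n
  simp [coeff_gevComp, sub_mul, Finset.sum_sub_distrib]
lemma gevComp_derivative {g : PowerSeries ℂ} (hg : PowerSeries.constantCoeff g = 0)
    (f : PowerSeries ℂ) :
    (d⁄dX ℂ) (gevComp g f) = (d⁄dX ℂ) g * gevComp g ((d⁄dX ℂ) f) := by
  ext n
  have key : ∀ k : ℕ, ((k : ℂ) + 1) * PowerSeries.coeff n (g ^ k * (d⁄dX ℂ) g)
      = PowerSeries.coeff (n + 1) (g ^ (k + 1)) * ((n : ℂ) + 1) := by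
    intro k
    have h1 : (d⁄dX ℂ) (g ^ (k + 1)) = (k + 1 : ℕ) • (g ^ k * (d⁄dX ℂ) g) := by
      simpa [smul_eq_mul] using Derivation.leibniz_pow (d⁄dX ℂ) (a := g) (k + 1)
    have h2 := congrArg (PowerSeries.coeff n) h1
    rw [PowerSeries.coeff_derivative, map_nsmul, nsmul_eq_mul] at h2
    push_cast at h2 ⊢
    rw [← h2]
  rw [PowerSeries.coeff_derivative, PowerSeries.coeff_mul]
  calc
    PowerSeries.coeff (n + 1) (gevComp g f) * ((n : ℂ) + 1)
        = (∑ k ∈ Finset.range (n + 1),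
            PowerSeries.coeff (k + 1) f * PowerSeries.coeff (n + 1) (g ^ (k + 1))
            + PowerSeries.coeff 0 f * PowerSeries.coeff (n + 1) (g ^ 0))
            * ((n : ℂ) + 1) := by
      rw [coeff_gevComp, Finset.sum_range_succ'
        (fun k => PowerSeries.coeff k f * PowerSeries.coeff (n + 1) (g ^ k)) (n + 1)]
    _ = ∑ k ∈ Finset.range (n + 1),
          PowerSeries.coeff (k + 1) f
            * (PowerSeries.coeff (n + 1) (g ^ (k + 1)) * ((n : ℂ) + 1)) := by
      rw [pow_zero, PowerSeries.coeff_one, if_neg (Nat.succ_ne_zero n), mul_zero, add_zero,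
        Finset.sum_mul]
      refine Finset.sum_congr rfl fun k _ => by ring
    _ = ∑ k ∈ Finset.range (n + 1),
          PowerSeries.coeff k ((d⁄dX ℂ) f) * PowerSeries.coeff n (g ^ k * (d⁄dX ℂ) g) := by
      refine Finset.sum_congr rfl fun k _ => ?_
      rw [← key k, PowerSeries.coeff_derivative]
      ring
    _ = ∑ k ∈ Finset.range (n + 1), PowerSeries.coeff k ((d⁄dX ℂ) f)
          * ∑ p ∈ Finset.HasAntidiagonal.antidiagonal n,
              PowerSeries.coeff p.1 ((d⁄dX ℂ) g) * PowerSeries.coeff p.2 (g ^ k) := by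
      refine Finset.sum_congr rfl fun k _ => ?_
      rw [mul_comm (g ^ k), PowerSeries.coeff_mul]
    _ = ∑ p ∈ Finset.HasAntidiagonal.antidiagonal n, PowerSeries.coeff p.1 ((d⁄dX ℂ) g)
          * ∑ k ∈ Finset.range (n + 1),
              PowerSeries.coeff k ((d⁄dX ℂ) f) * PowerSeries.coeff p.2 (g ^ k) := by
      simp_rw [Finset.mul_sum]
      rw [Finset.sum_comm]
      refine Finset.sum_congr rfl fun p _ => Finset.sum_congr rfl fun k _ => by ring
    _ = ∑ p ∈ Finset.HasAntidiagonal.antidiagonal n, PowerSeries.coeff p.1 ((d⁄dX ℂ) g)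
          * PowerSeries.coeff p.2 (gevComp g ((d⁄dX ℂ) f)) := by
      refine Finset.sum_congr rfl fun p hp => ?_
      rw [coeff_gevComp, sum_coeff_pow_ext hg _
        (Nat.succ_le_succ (Finset.HasAntidiagonal.antidiagonal.snd_le hp))]
/-- the series log(1+X) -/
noncomputable def gevL : PowerSeries ℂ :=
  PowerSeries.mk fun m => if m = 0 then 0 else (-1) ^ (m + 1) / m

lemma gevL_constantCoeff : PowerSeries.constantCoeff gevL = 0 := by
  rw [← PowerSeries.coeff_zero_eq_constantCoeff_apply]
  simp [gevL]

lemma gevL_abs (m : ℕ) : ‖PowerSeries.coeff m gevL‖ ≤ 1 := by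
  rcases Nat.eq_zero_or_pos m with h | h
  · subst h; simp [gevL]
  · have h1 : PowerSeries.coeff m gevL = (-1) ^ (m + 1) / m := by
      rw [gevL, PowerSeries.coeff_mk, if_neg (by omega)]
    rw [h1, norm_div]
    have h2 : ‖((-1) ^ (m + 1) : ℂ)‖ = 1 := by
      rw [norm_pow]; simp
    rw [h2, Complex.norm_natCast]
    rw [div_le_one (by exact_mod_cast h)]
    exact_mod_cast h

lemma one_add_X_mul_derivative_gevL :
    (1 + PowerSeries.X) * (d⁄dX ℂ) gevL = 1 := by
  have hD : ∀ m : ℕ, PowerSeries.coeff m ((d⁄dX ℂ) gevL) = (-1) ^ m := by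
    intro m
    rw [PowerSeries.coeff_derivative]
    have h1 : PowerSeries.coeff (m + 1) gevL = (-1) ^ (m + 2) / (m + 1) := by
      rw [gevL, PowerSeries.coeff_mk, if_neg (by omega)]
      push_cast; ring_nf
    rw [h1]
    have hm : ((m : ℂ) + 1) ≠ 0 := Nat.cast_add_one_ne_zero m
    field_simp
    ring
  ext m
  rw [add_mul, one_mul, map_add]
  cases m with
  | zero =>
    rw [hD 0]
    simp
  | succ m =>
    rw [hD (m + 1), PowerSeries.coeff_succ_X_mul, hD m, PowerSeries.coeff_one]
    simp [pow_succ]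
lemma derivative_exp' : (d⁄dX ℂ) (PowerSeries.exp ℂ) = PowerSeries.exp ℂ := by
  ext n
  rw [PowerSeries.coeff_derivative, PowerSeries.coeff_exp, PowerSeries.coeff_exp]
  rw [show ((n : ℂ) + 1) = algebraMap ℚ ℂ ((n : ℚ) + 1) by push_cast; simp, ← map_mul]
  congr 1
  have h1 : ((n.factorial : ℚ)) ≠ 0 := by exact_mod_cast n.factorial_ne_zero
  have h2 : ((n : ℚ) + 1) ≠ 0 := by positivity
  rw [Nat.factorial_succ]
  field_simp
  push_cast; ring

lemma exp_sub_one_constantCoeff : PowerSeries.constantCoeff (PowerSeries.exp ℂ - 1) = 0 := by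
  rw [map_sub, PowerSeries.constantCoeff_exp, map_one, sub_self]

lemma exp_sub_one_abs (m : ℕ) :
    ‖PowerSeries.coeff m (PowerSeries.exp ℂ - 1)‖ ≤ 1 := by
  rcases Nat.eq_zero_or_pos m with h | h
  · subst h
    rw [PowerSeries.coeff_zero_eq_constantCoeff_apply, exp_sub_one_constantCoeff]
    simp
  · rw [map_sub, PowerSeries.coeff_one, if_neg (by omega), sub_zero, PowerSeries.coeff_exp]
    have : (algebraMap ℚ ℂ) (1 / m.factorial) = ((1 : ℝ) / m.factorial : ℝ) := by
      push_cast; simp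
    rw [this]
    rw [Complex.norm_real, Real.norm_eq_abs]
    rw [abs_of_nonneg (by positivity)]
    rw [div_le_one (by positivity)]
    exact_mod_cast Nat.one_le_iff_ne_zero.mpr m.factorial_ne_zero

lemma gevComp_gevL_exp : gevComp gevL (PowerSeries.exp ℂ) = 1 + PowerSeries.X := by
  set u := gevComp gevL (PowerSeries.exp ℂ) with hu
  have hODE : (1 + PowerSeries.X) * (d⁄dX ℂ) u = u := by
    rw [hu, gevComp_derivative gevL_constantCoeff, derivative_exp', ← mul_assoc,
      one_add_X_mul_derivative_gevL, one_mul]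
  have hc : ∀ n : ℕ, PowerSeries.coeff n ((d⁄dX ℂ) u)
      + PowerSeries.coeff n (PowerSeries.X * (d⁄dX ℂ) u) = PowerSeries.coeff n u := by
    intro n
    conv_rhs => rw [← hODE]
    rw [add_mul, one_mul, map_add]
  have h0 : PowerSeries.coeff 0 u = 1 := by
    rw [hu, coeff_gevComp]
    simp [PowerSeries.coeff_exp]
  have h1 : PowerSeries.coeff 1 u = 1 := by
    have hx : PowerSeries.coeff 0 (PowerSeries.X * (d⁄dX ℂ) u) = 0 := by
      rw [PowerSeries.coeff_zero_eq_constantCoeff_apply, map_mul,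
        PowerSeries.constantCoeff_X, zero_mul]
    have := hc 0
    rw [hx, add_zero, PowerSeries.coeff_derivative, h0] at this
    simpa using this
  have key : ∀ m : ℕ, PowerSeries.coeff (m + 2) u * ((m : ℂ) + 2)
      = -(m : ℂ) * PowerSeries.coeff (m + 1) u := by
    intro m
    have := hc (m + 1)
    rw [PowerSeries.coeff_succ_X_mul, PowerSeries.coeff_derivative,
      PowerSeries.coeff_derivative] at this
    push_cast at this ⊢
    linear_combination this
  have hz : ∀ m : ℕ, PowerSeries.coeff (m + 2) u = 0 := by
    intro m
    induction m with
    | zero =>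
      have h := key 0
      rw [Nat.cast_zero, neg_zero, zero_mul, zero_add] at h
      norm_num at h
      exact h
      -- fallback
    | succ m ih =>
      have h := key (m + 1)
      rw [show m + 1 + 1 = m + 2 from rfl, ih, mul_zero] at h
      have h3 : ((m : ℂ) + 1 + 2) ≠ 0 := by
        have he : ((m : ℂ) + 1 + 2) = ((m + 3 : ℕ) : ℂ) := by push_cast; ring
        rw [he]
        exact Nat.cast_ne_zero.mpr (by omega)
      push_cast at h
      rcases mul_eq_zero.mp h with h | h
      · exact h
      · exact absurd h h3
  ext n
  match n with
  | 0 => rw [h0]; simp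
  | 1 => rw [h1]; simp [PowerSeries.coeff_one, PowerSeries.coeff_X]
  | (m + 2) =>
    rw [hz m]
    rw [map_add, PowerSeries.coeff_one, PowerSeries.coeff_X, if_neg (by omega),
      if_neg (by omega)]
    norm_num

lemma gevComp_exp_sub_one : gevComp gevL (PowerSeries.exp ℂ - 1) = PowerSeries.X := by
  rw [gevComp_sub, gevComp_gevL_exp, gevComp_one]
  ring

lemma coeff_F_eq (F G : PowerSeries ℂ)
    (hG : ∀ n : ℕ, PowerSeries.coeff n G =
      ∑ k ∈ Finset.range (n + 1), PowerSeries.coeff k F *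
        PowerSeries.coeff n ((PowerSeries.exp ℂ - 1) ^ k)) (n : ℕ) :
    PowerSeries.coeff n F = ∑ k ∈ Finset.range (n + 1),
      PowerSeries.coeff k G * PowerSeries.coeff n (gevL ^ k) := by
  symm
  calc
    ∑ k ∈ Finset.range (n + 1), PowerSeries.coeff k G * PowerSeries.coeff n (gevL ^ k)
        = ∑ k ∈ Finset.range (n + 1), (∑ j ∈ Finset.range (n + 1), PowerSeries.coeff j F
            * PowerSeries.coeff k ((PowerSeries.exp ℂ - 1) ^ j))
            * PowerSeries.coeff n (gevL ^ k) := by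
      refine Finset.sum_congr rfl fun k hk => ?_
      rw [hG k, ← sum_coeff_pow_ext exp_sub_one_constantCoeff
        (fun j => PowerSeries.coeff j F) (Nat.succ_le_succ (by simpa using Nat.lt_succ_iff.mp (Finset.mem_range.mp hk)))]
    _ = ∑ j ∈ Finset.range (n + 1), PowerSeries.coeff j F
          * ∑ k ∈ Finset.range (n + 1), PowerSeries.coeff k ((PowerSeries.exp ℂ - 1) ^ j)
            * PowerSeries.coeff n (gevL ^ k) := by
      simp_rw [Finset.sum_mul, Finset.mul_sum]
      rw [Finset.sum_comm]
      exact Finset.sum_congr rfl fun j _ => Finset.sum_congr rfl fun k _ => by ring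
    _ = ∑ j ∈ Finset.range (n + 1), PowerSeries.coeff j F
          * PowerSeries.coeff n (PowerSeries.X ^ j) := by
      refine Finset.sum_congr rfl fun j _ => ?_
      rw [← coeff_gevComp, gevComp_pow gevL_constantCoeff, gevComp_exp_sub_one]
    _ = PowerSeries.coeff n F := by
      rw [Finset.sum_eq_single n]
      · rw [PowerSeries.coeff_X_pow, if_pos rfl, mul_one]
      · intro j _ hj
        rw [PowerSeries.coeff_X_pow, if_neg (fun h => hj h.symm), mul_zero]
      · intro h
        exact absurd (Finset.self_mem_range_succ n) h

/-- majorant series X + X^2 + X^3 + ⋯ over ℝ -/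
noncomputable def gevM : PowerSeries ℝ :=
  PowerSeries.mk fun m => if m = 0 then 0 else 1

lemma gevM_coeff_nonneg (m : ℕ) : 0 ≤ PowerSeries.coeff m gevM := by
  rw [gevM, PowerSeries.coeff_mk]
  split <;> norm_num

lemma gevM_coeff_le_one (m : ℕ) : PowerSeries.coeff m gevM ≤ 1 := by
  rw [gevM, PowerSeries.coeff_mk]
  split <;> norm_num

lemma gevM_pow_nonneg (k n : ℕ) : 0 ≤ PowerSeries.coeff n (gevM ^ k) := by
  induction k generalizing n with
  | zero =>
    rw [pow_zero, PowerSeries.coeff_one]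
    split <;> norm_num
  | succ k ih =>
    rw [pow_succ, PowerSeries.coeff_mul]
    exact Finset.sum_nonneg fun p _ => mul_nonneg (ih p.1) (gevM_coeff_nonneg p.2)

lemma gevM_pow_le (k n : ℕ) : PowerSeries.coeff n (gevM ^ k) ≤ 2 ^ n := by
  induction k generalizing n with
  | zero =>
    rw [pow_zero, PowerSeries.coeff_one]
    split
    · next h => subst h; norm_num
    · positivity
  | succ k ih =>
    rw [pow_succ', PowerSeries.coeff_mul,
      Finset.Nat.sum_antidiagonal_eq_sum_range_succ
        (fun i j => PowerSeries.coeff i gevM * PowerSeries.coeff j (gevM ^ k)) n]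
    calc
      ∑ i ∈ Finset.range (n + 1),
          PowerSeries.coeff i gevM * PowerSeries.coeff (n - i) (gevM ^ k)
          ≤ ∑ i ∈ Finset.range (n + 1), (if i = 0 then 0 else (2 : ℝ) ^ (n - i)) := by
        refine Finset.sum_le_sum fun i _ => ?_
        rcases Nat.eq_zero_or_pos i with h | h
        · subst h
          rw [if_pos rfl, gevM, PowerSeries.coeff_mk, if_pos rfl, zero_mul]
        · rw [if_neg (by omega), gevM, PowerSeries.coeff_mk, if_neg (by omega), one_mul]
          exact ih (n - i)
      _ = ∑ i ∈ Finset.range n, (2 : ℝ) ^ (n - (i + 1)) := by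
        rw [Finset.sum_range_succ' (fun i => if i = 0 then 0 else (2 : ℝ) ^ (n - i)) n,
          if_pos rfl, add_zero]
        exact Finset.sum_congr rfl fun i _ => if_neg (Nat.succ_ne_zero i)
      _ = ∑ i ∈ Finset.range n, (2 : ℝ) ^ i := by
        rw [← Finset.sum_range_reflect (fun i => (2 : ℝ) ^ i) n]
        exact Finset.sum_congr rfl fun i hi => by
          congr 1
          omega
      _ ≤ 2 ^ n := by
        induction n with
        | zero => simp
        | succ m ihn =>
          rw [Finset.sum_range_succ, pow_succ]
          nlinarith [pow_pos (by norm_num : (0 : ℝ) < 2) m]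

lemma abs_coeff_pow_le {g : PowerSeries ℂ} (hg0 : PowerSeries.constantCoeff g = 0)
    (hg1 : ∀ m, ‖PowerSeries.coeff m g‖ ≤ 1) (k n : ℕ) :
    ‖PowerSeries.coeff n (g ^ k)‖ ≤ 2 ^ n := by
  have maj : ∀ k n : ℕ, ‖PowerSeries.coeff n (g ^ k)‖
      ≤ PowerSeries.coeff n (gevM ^ k) := by
    intro k
    induction k with
    | zero =>
      intro n
      rw [pow_zero, pow_zero, PowerSeries.coeff_one, PowerSeries.coeff_one]
      split <;> simp
    | succ k ih =>
      intro n
      rw [pow_succ, pow_succ, PowerSeries.coeff_mul, PowerSeries.coeff_mul]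
      refine (norm_sum_le _ _).trans ?_
      refine Finset.sum_le_sum fun p _ => ?_
      rw [norm_mul]
      refine mul_le_mul (ih p.1) ?_ (norm_nonneg _) (gevM_pow_nonneg k p.1)
      rcases Nat.eq_zero_or_pos p.2 with h | h
      · rw [h, PowerSeries.coeff_zero_eq_constantCoeff_apply, hg0]
        simpa using gevM_coeff_nonneg 0
      · exact (hg1 p.2).trans (by rw [gevM, PowerSeries.coeff_mk, if_neg (by omega)])
  exact (maj k n).trans (gevM_pow_le k n)

/-- transfer of the Gevrey property through substitution of a series with
bounded coefficients and zero constant term -/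
lemma gevrey_step {g : PowerSeries ℂ} (hg0 : PowerSeries.constantCoeff g = 0)
    (hg1 : ∀ m, ‖PowerSeries.coeff m g‖ ≤ 1) (a b : ℕ → ℂ)
    (hrel : ∀ n, b n = ∑ k ∈ Finset.range (n + 1), a k * PowerSeries.coeff n (g ^ k))
    (h : ∃ C : ℝ, 0 < C ∧ ∀ n : ℕ, 1 ≤ n → ‖a n‖ ≤ C ^ n * (n.factorial : ℝ)) :
    ∃ C : ℝ, 0 < C ∧ ∀ n : ℕ, 1 ≤ n → ‖b n‖ ≤ C ^ n * (n.factorial : ℝ) := by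
  obtain ⟨C, hC, ha⟩ := h
  set C₁ : ℝ := max C 1 with hC₁
  have hC₁1 : (1 : ℝ) ≤ C₁ := le_max_right _ _
  have hC₁0 : (0 : ℝ) < C₁ := lt_of_lt_of_le one_pos hC₁1
  refine ⟨4 * C₁, by positivity, fun n hn => ?_⟩
  have hsplit : b n = ∑ k ∈ Finset.range n, a (k + 1) * PowerSeries.coeff n (g ^ (k + 1)) := by
    rw [hrel n, Finset.sum_range_succ' (fun k => a k * PowerSeries.coeff n (g ^ k)) n,
      pow_zero, PowerSeries.coeff_one, if_neg (by omega), mul_zero, add_zero]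
  rw [hsplit]
  calc
    ‖∑ k ∈ Finset.range n, a (k + 1) * PowerSeries.coeff n (g ^ (k + 1))‖
        ≤ ∑ k ∈ Finset.range n,
            ‖a (k + 1)‖ * ‖PowerSeries.coeff n (g ^ (k + 1))‖ := by
      refine (norm_sum_le _ _).trans (le_of_eq ?_)
      exact Finset.sum_congr rfl fun k _ => norm_mul _ _
    _ ≤ ∑ k ∈ Finset.range n, (C₁ ^ n * (n.factorial : ℝ)) * 2 ^ n := by
      refine Finset.sum_le_sum fun k hk => ?_
      have hk' : k + 1 ≤ n := Finset.mem_range.mp hk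
      have h1 : ‖a (k + 1)‖ ≤ C₁ ^ n * (n.factorial : ℝ) := by
        refine (ha (k + 1) (by omega)).trans ?_
        have hCpow : C ^ (k + 1) ≤ C₁ ^ n := by
          calc C ^ (k + 1) ≤ C₁ ^ (k + 1) :=
                pow_le_pow_left₀ (le_of_lt hC) (le_max_left _ _) _
            _ ≤ C₁ ^ n := pow_le_pow_right₀ hC₁1 hk'
        have hfac : ((k + 1).factorial : ℝ) ≤ (n.factorial : ℝ) := by
          exact_mod_cast Nat.factorial_le hk'
        refine mul_le_mul hCpow hfac (by positivity) (by positivity)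
      refine mul_le_mul h1 (abs_coeff_pow_le hg0 hg1 (k + 1) n)
        (norm_nonneg _) (by positivity)
    _ = (n : ℝ) * ((C₁ ^ n * (n.factorial : ℝ)) * 2 ^ n) := by
      rw [Finset.sum_const, Finset.card_range, nsmul_eq_mul]
    _ ≤ (2 : ℝ) ^ n * ((C₁ ^ n * (n.factorial : ℝ)) * 2 ^ n) := by
      have : (n : ℝ) ≤ 2 ^ n := by
        exact_mod_cast (Nat.lt_two_pow_self (n := n)).le
      refine mul_le_mul_of_nonneg_right this (by positivity)
    _ = (4 * C₁) ^ n * (n.factorial : ℝ) := by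
      rw [mul_pow]
      have : (4 : ℝ) ^ n = 2 ^ n * 2 ^ n := by
        rw [← mul_pow]; norm_num
      rw [this]; ring

end

/-- A power series `F ∈ ℂ[[X]]` is Gevrey if and only if the power series
`G = F(exp X − 1)`, obtained by substituting `X ↦ e^X − 1` into `F`, is Gevrey.
Since `exp X − 1` has zero constant term, the coefficients of the composition
are given by the finite sums `coeff n G = ∑_{k=0}^n (coeff k F) · coeff n ((exp X − 1)^k)`. -/
theorem gevrey_subst_exp_sub_one_iff (F G : PowerSeries ℂ)
    (hG : ∀ n : ℕ, PowerSeries.coeff n G =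
      ∑ k ∈ Finset.range (n + 1), PowerSeries.coeff k F *
        PowerSeries.coeff n ((PowerSeries.exp ℂ - 1) ^ k)) :
    (∃ C : ℝ, 0 < C ∧ ∀ n : ℕ, 1 ≤ n →
      ‖PowerSeries.coeff n F‖ ≤ C ^ n * (n.factorial : ℝ)) ↔
    (∃ C : ℝ, 0 < C ∧ ∀ n : ℕ, 1 ≤ n →
      ‖PowerSeries.coeff n G‖ ≤ C ^ n * (n.factorial : ℝ)) := by
  constructor
  · intro h
    exact gevrey_step exp_sub_one_constantCoeff exp_sub_one_abs
      (fun k => PowerSeries.coeff k F) (fun n => PowerSeries.coeff n G) hG h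
  · intro h
    exact gevrey_step gevL_constantCoeff gevL_abs
      (fun k => PowerSeries.coeff k G) (fun n => PowerSeries.coeff n F)
      (coeff_F_eq F G hG) h
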